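/- Let A ∈ ℝ^{m×n} with full SVD A = U Σ Vᵀ, let Δ be a rectangular diagonal matrix with nonnegative diagonal entries arranged in non-increasing order, and set M = Q Δ Rᵀ for arbitrary orthogonal matrices Q ∈ O(m), R ∈ O(n). Then ‖M − A‖_F² ≥ ‖Δ − Σ‖_F², with equality when Q = U and R = V. -/

import Mathlib

open Matrix


lemma expand_sum {N : ℕ} (B : Fin N → Fin N → ℝ) (e f d s : ℕ → ℝ)
    (hdk : ∀ k : Fin N, d (k : ℕ) = ∑ t ∈ Finset.range N, if (k : ℕ) ≤ t then e t else 0)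
    (hsk : ∀ l : Fin N, s (l : ℕ) = ∑ u ∈ Finset.range N, if (l : ℕ) ≤ u then f u else 0) :
    ∑ k : Fin N, ∑ l : Fin N, d (k : ℕ) * s (l : ℕ) * B k l
    = ∑ t ∈ Finset.range N, ∑ u ∈ Finset.range N, e t * f u *
        (∑ k : Fin N, ∑ l : Fin N, if (k : ℕ) ≤ t ∧ (l : ℕ) ≤ u then B k l else 0) := by
  have key : ∀ (k l : Fin N), d (k : ℕ) * s (l : ℕ) * B k l
      = ∑ t ∈ Finset.range N, ∑ u ∈ Finset.range N,
          e t * f u * (if (k : ℕ) ≤ t ∧ (l : ℕ) ≤ u then B k l else 0) := by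
    intro k l
    rw [hdk k, hsk l, Finset.sum_mul_sum, Finset.sum_mul]
    apply Finset.sum_congr rfl
    intro t _
    rw [Finset.sum_mul]
    apply Finset.sum_congr rfl
    intro u _
    by_cases h1 : (k : ℕ) ≤ t <;> by_cases h2 : (l : ℕ) ≤ u <;>
      simp [h1, h2] <;> ring
  simp_rw [key, Finset.mul_sum]
  conv_lhs => enter [2, k]; rw [Finset.sum_comm]
  conv_lhs => enter [2, k, 2, t]; rw [Finset.sum_comm]
  rw [Finset.sum_comm]
  conv_lhs => enter [2, t]; rw [Finset.sum_comm]

lemma substoch {N : ℕ} (B : Fin N → Fin N → ℝ) (hB : ∀ k l, 0 ≤ B k l)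
    (hrow : ∀ k, ∑ l, B k l ≤ 1) (hcol : ∀ l, ∑ k, B k l ≤ 1)
    (d s : ℕ → ℝ) (hd : Antitone d) (hs : Antitone s)
    (hd0 : ∀ i, 0 ≤ d i) (hs0 : ∀ i, 0 ≤ s i) :
    ∑ k : Fin N, ∑ l : Fin N, d (k : ℕ) * s (l : ℕ) * B k l
      ≤ ∑ k : Fin N, d (k : ℕ) * s (k : ℕ) := by
  set D : ℕ → ℝ := fun k => if k < N then d k else 0 with hD
  set S : ℕ → ℝ := fun k => if k < N then s k else 0 with hS
  set e : ℕ → ℝ := fun t => D t - D (t + 1) with he'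
  set f : ℕ → ℝ := fun t => S t - S (t + 1) with hf'
  have key0 : ∀ (g : ℕ → ℝ), Antitone g → (∀ i, 0 ≤ g i) → ∀ t,
      (if t + 1 < N then g (t + 1) else 0) ≤ (if t < N then g t else 0) := by
    intro g hg hg0 t
    split_ifs with h1 h2
    · exact hg (Nat.le_succ t)
    · omega
    · exact hg0 t
    · exact le_refl 0
  have he : ∀ t, 0 ≤ e t := fun t => sub_nonneg.mpr (key0 d hd hd0 t)
  have hf : ∀ t, 0 ≤ f t := fun t => sub_nonneg.mpr (key0 s hs hs0 t)
  have tele : ∀ (g G : ℕ → ℝ), G = (fun k => if k < N then g k else 0) →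
      ∀ k : Fin N, g (k : ℕ) = ∑ t ∈ Finset.range N,
        if (k : ℕ) ≤ t then G t - G (t + 1) else 0 := by
    intro g G hG k
    rw [← Finset.sum_filter]
    have hfil : (Finset.range N).filter (fun t => (k : ℕ) ≤ t) = Finset.Ico (k : ℕ) N := by
      ext x; simp [Finset.mem_filter, Finset.mem_Ico]; omega
    rw [hfil, Finset.sum_Ico_eq_sub _ (le_of_lt k.isLt), Finset.sum_range_sub',
      Finset.sum_range_sub']
    have h1 : G N = 0 := by simp [hG]
    have h2 : G (k : ℕ) = g (k : ℕ) := by simp [hG, k.isLt]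
    rw [h1, h2]; ring
  have hdk := tele d D hD
  have hsk := tele s S hS
  have count : ∀ x, x < N → ∑ k : Fin N, (if (k : ℕ) ≤ x then (1:ℝ) else 0) = x + 1 := by
    intro x hx
    rw [Fin.sum_univ_eq_sum_range (fun i => if i ≤ x then (1:ℝ) else 0) N,
      ← Finset.sum_filter]
    have : (Finset.range N).filter (fun i => i ≤ x) = Finset.range (x + 1) := by
      ext i; simp; omega
    rw [this]; simp
  rw [expand_sum B e f d s hdk hsk]
  have rhs_eq : ∑ k : Fin N, d (k : ℕ) * s (k : ℕ)
      = ∑ k : Fin N, ∑ l : Fin N, d (k : ℕ) * s (l : ℕ) *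
          (if k = l then (1:ℝ) else 0) := by
    apply Finset.sum_congr rfl
    intro k _
    rw [Finset.sum_eq_single k]
    · simp
    · intro b _ hbk
      rw [if_neg (Ne.symm hbk), mul_zero]
    · simp
  rw [rhs_eq, expand_sum (fun k l => if k = l then (1:ℝ) else 0) e f d s hdk hsk]
  apply Finset.sum_le_sum
  intro t ht
  apply Finset.sum_le_sum
  intro u hu
  rw [Finset.mem_range] at ht hu
  apply mul_le_mul_of_nonneg_left _ (mul_nonneg (he t) (hf u))
  -- RHS inner sum = min t u + 1
  have id_eq : (∑ k : Fin N, ∑ l : Fin N,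
      if (k : ℕ) ≤ t ∧ (l : ℕ) ≤ u then (if k = l then (1:ℝ) else 0) else 0)
      = min t u + 1 := by
    have step : ∀ k : Fin N, (∑ l : Fin N,
        if (k : ℕ) ≤ t ∧ (l : ℕ) ≤ u then (if k = l then (1:ℝ) else 0) else 0)
        = if (k : ℕ) ≤ min t u then (1:ℝ) else 0 := by
      intro k
      rw [Finset.sum_eq_single k]
      · by_cases h1 : (k : ℕ) ≤ t <;> by_cases h2 : (k : ℕ) ≤ u <;>
          simp [h1, h2, le_min_iff]
      · intro l _ hl
        by_cases h : (k : ℕ) ≤ t ∧ (l : ℕ) ≤ u <;> simp [h, Ne.symm hl]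
      · simp
    simp_rw [step]
    exact count (min t u) (lt_of_le_of_lt (min_le_left t u) ht)
  rw [id_eq]
  -- bound the B-sum by t+1 and by u+1
  have bound1 : (∑ k : Fin N, ∑ l : Fin N,
      if (k : ℕ) ≤ t ∧ (l : ℕ) ≤ u then B k l else 0) ≤ t + 1 := by
    calc (∑ k : Fin N, ∑ l : Fin N, if (k : ℕ) ≤ t ∧ (l : ℕ) ≤ u then B k l else 0)
        ≤ ∑ k : Fin N, (if (k : ℕ) ≤ t then (1:ℝ) else 0) := by
          apply Finset.sum_le_sum
          intro k _
          by_cases h : (k : ℕ) ≤ t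
          · rw [if_pos h]
            calc (∑ l : Fin N, if (k : ℕ) ≤ t ∧ (l : ℕ) ≤ u then B k l else 0)
                ≤ ∑ l : Fin N, B k l := by
                  apply Finset.sum_le_sum
                  intro l _
                  by_cases h2 : (k : ℕ) ≤ t ∧ (l : ℕ) ≤ u <;> simp [h2, hB k l]
              _ ≤ 1 := hrow k
          · simp [h]
      _ = t + 1 := count t ht
  have bound2 : (∑ k : Fin N, ∑ l : Fin N,
      if (k : ℕ) ≤ t ∧ (l : ℕ) ≤ u then B k l else 0) ≤ u + 1 := by
    rw [Finset.sum_comm]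
    calc (∑ l : Fin N, ∑ k : Fin N, if (k : ℕ) ≤ t ∧ (l : ℕ) ≤ u then B k l else 0)
        ≤ ∑ l : Fin N, (if (l : ℕ) ≤ u then (1:ℝ) else 0) := by
          apply Finset.sum_le_sum
          intro l _
          by_cases h : (l : ℕ) ≤ u
          · rw [if_pos h]
            calc (∑ k : Fin N, if (k : ℕ) ≤ t ∧ (l : ℕ) ≤ u then B k l else 0)
                ≤ ∑ k : Fin N, B k l := by
                  apply Finset.sum_le_sum
                  intro k _
                  by_cases h2 : (k : ℕ) ≤ t ∧ (l : ℕ) ≤ u <;> simp [h2, hB k l]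
              _ ≤ 1 := hcol l
          · simp [h]
      _ = u + 1 := count u hu
  rcases le_total t u with h | h
  · rw [min_eq_left h]; exact bound1
  · rw [min_eq_right h]; exact bound2

lemma frob_eq_trace {m n : ℕ} (X : Matrix (Fin m) (Fin n) ℝ) :
    ∑ i : Fin m, ∑ j : Fin n, X i j ^ 2 = trace (Xᵀ * X) := by
  rw [Finset.sum_comm]
  simp [trace, Matrix.mul_apply, Matrix.diag, sq]

lemma trace_tmul {m n : ℕ} (X Y : Matrix (Fin m) (Fin n) ℝ) :
    trace (Xᵀ * Y) = ∑ i : Fin m, ∑ j : Fin n, X i j * Y i j := by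
  rw [Finset.sum_comm]
  simp [trace, Matrix.mul_apply, Matrix.diag]

lemma frob_sub_expand {m n : ℕ} (X Y : Matrix (Fin m) (Fin n) ℝ) :
    trace ((X - Y)ᵀ * (X - Y))
      = trace (Xᵀ * X) + trace (Yᵀ * Y) - 2 * trace (Xᵀ * Y) := by
  have h : (X - Y)ᵀ * (X - Y) = Xᵀ * X - Xᵀ * Y - Yᵀ * X + Yᵀ * Y := by
    rw [transpose_sub, Matrix.sub_mul, Matrix.mul_sub, Matrix.mul_sub]; abel
  rw [h, trace_add, trace_sub, trace_sub]
  have h2 : trace (Yᵀ * X) = trace (Xᵀ * Y) := by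
    rw [← trace_transpose, transpose_mul, transpose_transpose]
  rw [h2]; ring

lemma frob_conj {m n : ℕ} (U : Matrix (Fin m) (Fin m) ℝ) (V : Matrix (Fin n) (Fin n) ℝ)
    (hU : Uᵀ * U = 1) (hV : Vᵀ * V = 1) (X : Matrix (Fin m) (Fin n) ℝ) :
    trace ((U * X * Vᵀ)ᵀ * (U * X * Vᵀ)) = trace (Xᵀ * X) := by
  have h : (U * X * Vᵀ)ᵀ * (U * X * Vᵀ) = V * (Xᵀ * X * Vᵀ) := by
    simp only [transpose_mul, transpose_transpose, Matrix.mul_assoc]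
    rw [← Matrix.mul_assoc Uᵀ U, hU, Matrix.one_mul]
  rw [h, trace_mul_comm, Matrix.mul_assoc, hV, Matrix.mul_one]
lemma sum_castLE_le {N m : ℕ} (h : N ≤ m) (f : Fin m → ℝ) (hf : ∀ a, 0 ≤ f a) :
    ∑ l : Fin N, f (Fin.castLE h l) ≤ ∑ a, f a := by
  have : ∑ l : Fin N, f (Fin.castLE h l)
      = ∑ x ∈ Finset.univ.map (Fin.castLEEmb h), f x := by
    rw [Finset.sum_map]; rfl
  rw [this]
  exact Finset.sum_le_sum_of_subset_of_nonneg (Finset.subset_univ _)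
    (fun i _ _ => hf i)

lemma diag_pair_sum {m n : ℕ} (f : Fin m → Fin n → ℝ) :
    ∑ i : Fin m, ∑ j : Fin n, (if (i : ℕ) = (j : ℕ) then f i j else 0)
    = ∑ k : Fin (min m n),
        f (Fin.castLE (min_le_left m n) k) (Fin.castLE (min_le_right m n) k) := by
  have inner : ∀ i : Fin m, ∑ j : Fin n, (if (i : ℕ) = (j : ℕ) then f i j else 0)
      = if h : (i : ℕ) < n then f i ⟨i, h⟩ else 0 := by
    intro i
    by_cases h : (i : ℕ) < n
    · rw [dif_pos h, Finset.sum_eq_single (⟨(i : ℕ), h⟩ : Fin n)]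
      · simp
      · intro j _ hj
        rw [if_neg]
        intro hc
        exact hj (Fin.ext hc.symm)
      · simp
    · rw [dif_neg h]
      apply Finset.sum_eq_zero
      intro j _
      rw [if_neg]
      intro hc
      exact h (hc ▸ j.isLt)
  simp_rw [inner]
  rw [show (Finset.univ : Finset (Fin m)) = Finset.univ.map (Fin.castLEEmb (min_le_left m n)) ∪
    (Finset.univ \ Finset.univ.map (Fin.castLEEmb (min_le_left m n))) from by
      simp [Finset.union_sdiff_of_subset]]
  rw [Finset.sum_union (Finset.disjoint_sdiff), Finset.sum_map]
  have h2 : ∑ x ∈ Finset.univ \ Finset.univ.map (Fin.castLEEmb (min_le_left m n)),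
      (if h : (x : ℕ) < n then f x ⟨x, h⟩ else 0) = 0 := by
    apply Finset.sum_eq_zero
    intro i hi
    simp only [Finset.mem_sdiff, Finset.mem_map, Finset.mem_univ, true_and] at hi
    have : ¬ (i : ℕ) < min m n := by
      intro hlt
      exact hi ⟨⟨(i : ℕ), hlt⟩, Fin.ext rfl⟩
    rw [dif_neg]
    intro hn
    exact this (lt_min i.isLt hn)
  rw [h2, add_zero]
  apply Finset.sum_congr rfl
  intro k _
  rw [dif_pos]
  · congr 1
  · exact lt_of_lt_of_le k.isLt (min_le_right m n)

lemma vonNeumann {m n : ℕ} (P : Matrix (Fin m) (Fin m) ℝ) (G : Matrix (Fin n) (Fin n) ℝ)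
    (hP1 : P * Pᵀ = 1) (hP2 : Pᵀ * P = 1) (hG1 : G * Gᵀ = 1) (hG2 : Gᵀ * G = 1)
    (d s : ℕ → ℝ) (hd : Antitone d) (hs : Antitone s)
    (hd0 : ∀ i, 0 ≤ d i) (hs0 : ∀ i, 0 ≤ s i) :
    trace ((Matrix.of fun (i : Fin m) (j : Fin n) =>
        if (i : ℕ) = (j : ℕ) then d (i : ℕ) else 0)ᵀ *
      (P * (Matrix.of fun (i : Fin m) (j : Fin n) =>
        if (i : ℕ) = (j : ℕ) then s (i : ℕ) else 0) * G))
    ≤ trace ((Matrix.of fun (i : Fin m) (j : Fin n) =>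
        if (i : ℕ) = (j : ℕ) then d (i : ℕ) else 0)ᵀ *
      (Matrix.of fun (i : Fin m) (j : Fin n) =>
        if (i : ℕ) = (j : ℕ) then s (i : ℕ) else 0)) := by
  set em := min_le_left m n
  set en := min_le_right m n
  set ι : Fin (min m n) → Fin m := Fin.castLE em with hι
  set κ : Fin (min m n) → Fin n := Fin.castLE en with hκ
  set Δ : Matrix (Fin m) (Fin n) ℝ := Matrix.of fun (i : Fin m) (j : Fin n) =>
    if (i : ℕ) = (j : ℕ) then d (i : ℕ) else 0 with hΔ
  set Sg : Matrix (Fin m) (Fin n) ℝ := Matrix.of fun (i : Fin m) (j : Fin n) =>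
    if (i : ℕ) = (j : ℕ) then s (i : ℕ) else 0 with hSg
  -- RHS as diagonal sum
  have hR : trace (Δᵀ * Sg) = ∑ k : Fin (min m n), d (k : ℕ) * s (k : ℕ) := by
    rw [trace_tmul]
    have h1 : ∀ (i : Fin m) (j : Fin n), Δ i j * Sg i j
        = if (i : ℕ) = (j : ℕ) then d (i : ℕ) * s (i : ℕ) else 0 := by
      intro i j
      by_cases h : (i : ℕ) = (j : ℕ) <;> simp [hΔ, hSg, h]
    simp_rw [h1]
    rw [diag_pair_sum (f := fun (i : Fin m) (_ : Fin n) => d (i : ℕ) * s (i : ℕ))]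
    simp
  -- entry formula for P * Sg * G
  have hY : ∀ (i : Fin m) (j : Fin n), (P * Sg * G) i j
      = ∑ l : Fin (min m n), P i (ι l) * s (l : ℕ) * G (κ l) j := by
    intro i j
    rw [Matrix.mul_apply]
    simp_rw [Matrix.mul_apply, Finset.sum_mul]
    rw [Finset.sum_comm]
    have h2 : ∀ (a : Fin m) (b : Fin n), P i a * Sg a b * G b j
        = if (a : ℕ) = (b : ℕ) then P i a * s (a : ℕ) * G b j else 0 := by
      intro a b
      by_cases h : (a : ℕ) = (b : ℕ) <;> simp [hSg, h] <;> ring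
    simp_rw [h2]
    rw [diag_pair_sum (f := fun (a : Fin m) (b : Fin n) => P i a * s (a : ℕ) * G b j)]
    rfl
  -- LHS as double diagonal sum
  have hL : trace (Δᵀ * (P * Sg * G))
      = ∑ k : Fin (min m n), ∑ l : Fin (min m n),
          d (k : ℕ) * s (l : ℕ) * (P (ι k) (ι l) * G (κ l) (κ k)) := by
    rw [trace_tmul]
    have h1 : ∀ (i : Fin m) (j : Fin n), Δ i j * (P * Sg * G) i j
        = if (i : ℕ) = (j : ℕ) then d (i : ℕ) * (P * Sg * G) i j else 0 := by
      intro i j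
      by_cases h : (i : ℕ) = (j : ℕ) <;> simp [hΔ, h]
    simp_rw [h1]
    rw [diag_pair_sum (f := fun (i : Fin m) (j : Fin n) => d (i : ℕ) * (P * Sg * G) i j)]
    apply Finset.sum_congr rfl
    intro k _
    rw [hY, Finset.mul_sum]
    apply Finset.sum_congr rfl
    intro l _
    simp only [Fin.coe_castLE]
    ring
  rw [hL, hR]
  -- Cauchy-Schwarz row/column bounds
  set B : Fin (min m n) → Fin (min m n) → ℝ :=
    fun k l => |P (ι k) (ι l)| * |G (κ l) (κ k)| with hB'
  have hBnn : ∀ k l, 0 ≤ B k l := fun k l => mul_nonneg (abs_nonneg _) (abs_nonneg _)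
  have cs_bound : ∀ (a b : Fin (min m n) → ℝ),
      (∑ l, a l ^ 2) ≤ 1 → (∑ l, b l ^ 2) ≤ 1 → ∑ l, |a l| * |b l| ≤ 1 := by
    intro a b ha hb
    have h1 := Finset.sum_mul_sq_le_sq_mul_sq Finset.univ (fun l => |a l|) (fun l => |b l|)
    simp only [sq_abs] at h1
    have h2 : (0:ℝ) ≤ ∑ l, |a l| * |b l| :=
      Finset.sum_nonneg fun l _ => mul_nonneg (abs_nonneg _) (abs_nonneg _)
    have h3 : (0:ℝ) ≤ ∑ l, a l ^ 2 := Finset.sum_nonneg fun l _ => sq_nonneg _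
    have h4 : (0:ℝ) ≤ ∑ l, b l ^ 2 := Finset.sum_nonneg fun l _ => sq_nonneg _
    nlinarith
  have rowP : ∀ i : Fin m, ∑ a : Fin m, P i a ^ 2 = 1 := by
    intro i
    have : (P * Pᵀ) i i = ∑ a, P i a ^ 2 := by
      simp [Matrix.mul_apply, Matrix.transpose_apply, sq]
    rw [hP1] at this
    simpa [Matrix.one_apply] using this.symm
  have colP : ∀ a : Fin m, ∑ i : Fin m, P i a ^ 2 = 1 := by
    intro a
    have : (Pᵀ * P) a a = ∑ i, P i a ^ 2 := by
      simp [Matrix.mul_apply, Matrix.transpose_apply, sq]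
    rw [hP2] at this
    simpa [Matrix.one_apply] using this.symm
  have rowG : ∀ b : Fin n, ∑ j : Fin n, G b j ^ 2 = 1 := by
    intro b
    have : (G * Gᵀ) b b = ∑ j, G b j ^ 2 := by
      simp [Matrix.mul_apply, Matrix.transpose_apply, sq]
    rw [hG1] at this
    simpa [Matrix.one_apply] using this.symm
  have colG : ∀ j : Fin n, ∑ b : Fin n, G b j ^ 2 = 1 := by
    intro j
    have : (Gᵀ * G) j j = ∑ b, G b j ^ 2 := by
      simp [Matrix.mul_apply, Matrix.transpose_apply, sq]
    rw [hG2] at this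
    simpa [Matrix.one_apply] using this.symm
  have hrow : ∀ k, ∑ l, B k l ≤ 1 := by
    intro k
    apply cs_bound
    · exact le_trans (sum_castLE_le em (fun a => P (ι k) a ^ 2) (fun a => sq_nonneg _))
        (le_of_eq (rowP (ι k)))
    · exact le_trans (sum_castLE_le en (fun b => G b (κ k) ^ 2) (fun b => sq_nonneg _))
        (le_of_eq (colG (κ k)))
  have hcol : ∀ l, ∑ k, B k l ≤ 1 := by
    intro l
    apply cs_bound
    · exact le_trans (sum_castLE_le em (fun i => P i (ι l) ^ 2) (fun i => sq_nonneg _))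
        (le_of_eq (colP (ι l)))
    · exact le_trans (sum_castLE_le en (fun j => G (κ l) j ^ 2) (fun j => sq_nonneg _))
        (le_of_eq (rowG (κ l)))
  calc ∑ k : Fin (min m n), ∑ l : Fin (min m n),
        d (k : ℕ) * s (l : ℕ) * (P (ι k) (ι l) * G (κ l) (κ k))
      ≤ ∑ k : Fin (min m n), ∑ l : Fin (min m n), d (k : ℕ) * s (l : ℕ) * B k l := by
        apply Finset.sum_le_sum
        intro k _
        apply Finset.sum_le_sum
        intro l _
        apply mul_le_mul_of_nonneg_left _ (mul_nonneg (hd0 _) (hs0 _))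
        calc P (ι k) (ι l) * G (κ l) (κ k) ≤ |P (ι k) (ι l) * G (κ l) (κ k)| := le_abs_self _
          _ = B k l := abs_mul _ _
    _ ≤ ∑ k : Fin (min m n), d (k : ℕ) * s (k : ℕ) :=
        substoch B hBnn hrow hcol d s hd hs hd0 hs0


/-- Let `A = U Σ Vᵀ` be a full SVD of `A ∈ ℝ^{m×n}` (with non-increasing
nonnegative singular values on the rectangular diagonal of `Σ`), let `Δ` be a
rectangular diagonal matrix with nonnegative diagonal entries arranged in
non-increasing order, and `M = Q Δ Rᵀ` for orthogonal `Q`, `R`. Then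
`‖M - A‖_F² ≥ ‖Δ - Σ‖_F²`, with equality when `Q = U` and `R = V`. -/
theorem stmt_9 {m n : ℕ} (A M : Matrix (Fin m) (Fin n) ℝ)
    (s d : ℕ → ℝ)
    (U Q : Matrix (Fin m) (Fin m) ℝ) (V R : Matrix (Fin n) (Fin n) ℝ)
    (hs : Antitone s) (hs0 : ∀ i, 0 ≤ s i)
    (hd : Antitone d) (hd0 : ∀ i, 0 ≤ d i)
    (hU : Uᵀ * U = 1) (hV : Vᵀ * V = 1)
    (hQ : Qᵀ * Q = 1) (hR : Rᵀ * R = 1)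
    (hA : A = U * (Matrix.of fun (i : Fin m) (j : Fin n) =>
      if (i : ℕ) = (j : ℕ) then s (i : ℕ) else 0) * Vᵀ)
    (hM : M = Q * (Matrix.of fun (i : Fin m) (j : Fin n) =>
      if (i : ℕ) = (j : ℕ) then d (i : ℕ) else 0) * Rᵀ) :
    (∑ i : Fin m, ∑ j : Fin n,
        (((Matrix.of fun (i : Fin m) (j : Fin n) =>
            if (i : ℕ) = (j : ℕ) then d (i : ℕ) else 0) -
          (Matrix.of fun (i : Fin m) (j : Fin n) =>
            if (i : ℕ) = (j : ℕ) then s (i : ℕ) else 0)) i j) ^ 2 ≤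
      ∑ i : Fin m, ∑ j : Fin n, ((M - A) i j) ^ 2) ∧
    (Q = U → R = V →
      ∑ i : Fin m, ∑ j : Fin n, ((M - A) i j) ^ 2 =
        ∑ i : Fin m, ∑ j : Fin n,
          (((Matrix.of fun (i : Fin m) (j : Fin n) =>
              if (i : ℕ) = (j : ℕ) then d (i : ℕ) else 0) -
            (Matrix.of fun (i : Fin m) (j : Fin n) =>
              if (i : ℕ) = (j : ℕ) then s (i : ℕ) else 0)) i j) ^ 2) := by

  set Δ : Matrix (Fin m) (Fin n) ℝ := Matrix.of fun (i : Fin m) (j : Fin n) =>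
    if (i : ℕ) = (j : ℕ) then d (i : ℕ) else 0 with hΔ
  set Sg : Matrix (Fin m) (Fin n) ℝ := Matrix.of fun (i : Fin m) (j : Fin n) =>
    if (i : ℕ) = (j : ℕ) then s (i : ℕ) else 0 with hSg
  have hU' : U * Uᵀ = 1 := mul_eq_one_comm.mp hU
  have hV' : V * Vᵀ = 1 := mul_eq_one_comm.mp hV
  have hQ' : Q * Qᵀ = 1 := mul_eq_one_comm.mp hQ
  have hR' : R * Rᵀ = 1 := mul_eq_one_comm.mp hR
  constructor
  · rw [frob_eq_trace, frob_eq_trace, frob_sub_expand, frob_sub_expand]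
    have hMM : trace (Mᵀ * M) = trace (Δᵀ * Δ) := by
      rw [hM]; exact frob_conj Q R hQ hR Δ
    have hAA : trace (Aᵀ * A) = trace (Sgᵀ * Sg) := by
      rw [hA]; exact frob_conj U V hU hV Sg
    have hMA : trace (Mᵀ * A) ≤ trace (Δᵀ * Sg) := by
      have e1 : trace (Mᵀ * A) = trace (Δᵀ * ((Qᵀ * U) * Sg * (Vᵀ * R))) := by
        rw [hM, hA]
        simp only [transpose_mul, transpose_transpose, Matrix.mul_assoc]
        rw [trace_mul_comm]
        congr 1
        simp only [Matrix.mul_assoc]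
      rw [e1]
      apply vonNeumann (Qᵀ * U) (Vᵀ * R) _ _ _ _ d s hd hs hd0 hs0
      · simp only [transpose_mul, transpose_transpose, Matrix.mul_assoc]
        rw [← Matrix.mul_assoc U Uᵀ Q, hU', Matrix.one_mul, hQ]
      · simp only [transpose_mul, transpose_transpose, Matrix.mul_assoc]
        rw [← Matrix.mul_assoc Q Qᵀ U, hQ', Matrix.one_mul, hU]
      · simp only [transpose_mul, transpose_transpose, Matrix.mul_assoc]
        rw [← Matrix.mul_assoc R Rᵀ V, hR', Matrix.one_mul, hV]
      · simp only [transpose_mul, transpose_transpose, Matrix.mul_assoc]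
        rw [← Matrix.mul_assoc V Vᵀ R, hV', Matrix.one_mul, hR]
    linarith
  · intro hQU hRV
    subst hQU hRV
    have hMA : M - A = Q * (Δ - Sg) * Rᵀ := by
      rw [hM, hA, Matrix.mul_sub, Matrix.sub_mul]
    rw [hMA, frob_eq_trace, frob_eq_trace, frob_conj Q R hQ hR]
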